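/- arXiv:1604.04120 — 3 statements merged into one kernel-verified Lean document; each statement's English description precedes it below -/
import Mathlib

section
/- The improper integral of the sinc function over the real line equals 1, i.e., ∫_{-∞}^{∞} sinc(x) dx = 1, where sinc(x) = sin(πx)/(πx) for x ≠ 0 and sinc(0) = 1. -/
open Real Filter MeasureTheory Set

noncomputable def sinc (x : ℝ) : ℝ := if x = 0 then 1 else Real.sin (Real.pi * x) / (Real.pi * x)

lemma lap (s R : ℝ) :
    ∫ t in (0:ℝ)..R, Real.exp (-(s*t)) * Real.sin t
      = (1 - Real.exp (-(s*R)) * (Real.cos R + s * Real.sin R)) / (1 + s^2) := by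
  have hderiv : ∀ t ∈ Set.uIcc (0:ℝ) R,
      HasDerivAt (fun t => -(Real.exp (-(s*t)) * (s * Real.sin t + Real.cos t)) / (1 + s^2))
        (Real.exp (-(s*t)) * Real.sin t) t := by
    intro t _
    have h1 : HasDerivAt (fun t : ℝ => Real.exp (-(s*t))) (Real.exp (-(s*t)) * (-s)) t := by
      have := (Real.hasDerivAt_exp (-(s*t))).comp t (((hasDerivAt_id t).const_mul s).neg)
      simpa [mul_comm, Function.comp_def, Pi.neg_def] using this
    have h2 : HasDerivAt (fun t : ℝ => s * Real.sin t + Real.cos t)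
        (s * Real.cos t - Real.sin t) t :=
      ((Real.hasDerivAt_sin t).const_mul s).add (Real.hasDerivAt_cos t)
    have h3 : HasDerivAt (fun t => -(Real.exp (-(s*t)) * (s * Real.sin t + Real.cos t)) / (1 + s^2)) _ t :=
      (h1.mul h2).neg.div_const (1 + s^2)
    convert h3 using 1
    have hs : 1 + s^2 ≠ 0 := by positivity
    rw [eq_div_iff hs]
    ring
  have hint : IntervalIntegrable (fun t => Real.exp (-(s*t)) * Real.sin t) volume 0 R :=
    (Continuous.mul (by continuity) Real.continuous_sin).intervalIntegrable 0 R
  rw [intervalIntegral.integral_eq_sub_of_hasDerivAt hderiv hint]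
  have hs : 1 + s^2 ≠ 0 := by positivity
  field_simp
  simp only [Real.sin_zero, Real.cos_zero, mul_zero, neg_zero, Real.exp_zero]
  ring

lemma expint {t : ℝ} (ht : 0 < t) : ∫ s in Ioi (0:ℝ), Real.exp (-(s*t)) = 1/t := by
  have := integral_comp_mul_left_Ioi (fun x => Real.exp (-x)) 0 ht
  simp only [mul_zero] at this
  rw [integral_exp_neg_Ioi_zero] at this
  have : ∫ s in Ioi (0:ℝ), Real.exp (-(t*s)) = t⁻¹ := by simpa using this
  rw [one_div, ← this]
  congr 1; ext s; rw [mul_comm]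

lemma abs_sin_le_self {t : ℝ} (ht : 0 ≤ t) : |Real.sin t| ≤ t := by
  rcases le_or_gt t 1 with h | h
  · rw [abs_of_nonneg (Real.sin_nonneg_of_nonneg_of_le_pi ht (by linarith [Real.pi_gt_three]))]
    exact Real.sin_le ht
  · exact (Real.abs_sin_le_one t).trans h.le

lemma err_bound {R : ℝ} (hR : 0 < R) {s : ℝ} (hs : 0 ≤ s) :
    ‖Real.exp (-(s*R)) * (Real.cos R + s * Real.sin R) / (1 + s^2)‖ ≤ 2 * Real.exp (-(R*s)) := by
  have h1 : |Real.cos R + s * Real.sin R| ≤ 1 + s := by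
    calc |Real.cos R + s * Real.sin R| ≤ |Real.cos R| + |s * Real.sin R| := abs_add_le _ _
    _ ≤ 1 + s := by
        have := Real.abs_cos_le_one R
        have h2 : |s * Real.sin R| ≤ s := by
          rw [abs_mul, abs_of_nonneg hs]
          nlinarith [Real.abs_sin_le_one R, abs_nonneg (Real.sin R)]
        linarith
  have hpos : (0:ℝ) < 1 + s^2 := by positivity
  rw [Real.norm_eq_abs, abs_div, abs_mul, abs_of_pos hpos, Real.abs_exp, mul_comm s R]
  rw [div_le_iff₀ hpos]
  have : (1 + s) ≤ 2 * (1 + s^2) := by nlinarith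
  have he : (0:ℝ) < Real.exp (-(R*s)) := Real.exp_pos _
  nlinarith [abs_nonneg (Real.cos R + s * Real.sin R)]

lemma err_integrable {R : ℝ} (hR : 0 < R) :
    IntegrableOn (fun s => Real.exp (-(s*R)) * (Real.cos R + s * Real.sin R) / (1 + s^2))
      (Ioi (0:ℝ)) := by
  have hg : IntegrableOn (fun s => 2 * Real.exp (-(R*s))) (Ioi (0:ℝ)) := by
    have := exp_neg_integrableOn_Ioi 0 hR
    simpa [neg_mul, IntegrableOn] using this.const_mul 2
  refine hg.mono' ?_ ?_
  · have hc : Continuous fun s : ℝ => Real.exp (-(s*R)) * (Real.cos R + s * Real.sin R) / (1 + s^2) := by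
      apply Continuous.div
      · continuity
      · continuity
      · intro s; positivity
    exact hc.aestronglyMeasurable.restrict
  · filter_upwards [self_mem_ae_restrict measurableSet_Ioi] with s hs
    exact err_bound hR (le_of_lt hs)

lemma key {R : ℝ} (hR : 0 < R) :
    ∫ t in (0:ℝ)..R, Real.sin t / t
      = π/2 - ∫ s in Ioi (0:ℝ), Real.exp (-(s*R)) * (Real.cos R + s * Real.sin R) / (1 + s^2) := by
  have hF : Integrable (Function.uncurry fun t s => Real.exp (-(s*t)) * Real.sin t)
      ((volume.restrict (Ioc (0:ℝ) R)).prod (volume.restrict (Ioi (0:ℝ)))) := by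
    have hmeas : AEStronglyMeasurable (Function.uncurry fun t s => Real.exp (-(s*t)) * Real.sin t)
        ((volume.restrict (Ioc (0:ℝ) R)).prod (volume.restrict (Ioi (0:ℝ)))) := by
      apply Continuous.aestronglyMeasurable
      exact (Real.continuous_exp.comp (continuous_snd.mul continuous_fst).neg).mul
        (Real.continuous_sin.comp continuous_fst)
    rw [integrable_prod_iff hmeas]
    constructor
    · filter_upwards [self_mem_ae_restrict measurableSet_Ioc] with t ht
      have ht0 : 0 < t := ht.1
      have : Integrable (fun s => Real.exp (-(t*s))) (volume.restrict (Ioi (0:ℝ))) :=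
        by simpa [neg_mul, IntegrableOn] using exp_neg_integrableOn_Ioi 0 ht0
      have := this.mul_const (Real.sin t)
      refine this.congr (by filter_upwards with s; simp [Function.uncurry, mul_comm])
    · have haes : AEStronglyMeasurable
          (fun t => ∫ s in Ioi (0:ℝ), ‖Real.exp (-(s*t)) * Real.sin t‖)
          (volume.restrict (Ioc (0:ℝ) R)) := hmeas.norm.integral_prod_right'
      refine (integrable_const (1:ℝ)).mono' haes ?_
      filter_upwards [self_mem_ae_restrict measurableSet_Ioc] with t ht
      have ht0 : 0 < t := ht.1
      simp only [Function.uncurry]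
      have hcalc : ∫ s in Ioi (0:ℝ), ‖Real.exp (-(s*t)) * Real.sin t‖
          = (1/t) * |Real.sin t| := by
        simp only [norm_mul, Real.norm_eq_abs, Real.abs_exp]
        rw [integral_mul_const, expint ht0]
      rw [Real.norm_eq_abs, hcalc, abs_of_nonneg (by positivity)]
      rw [one_div, inv_mul_le_iff₀ ht0, mul_one]
      exact abs_sin_le_self ht0.le
  have swap := MeasureTheory.integral_integral_swap hF
  have lhs_eq : ∫ t in (0:ℝ)..R, Real.sin t / t
      = ∫ t in Ioc (0:ℝ) R, ∫ s in Ioi (0:ℝ), Real.exp (-(s*t)) * Real.sin t := by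
    rw [intervalIntegral.integral_of_le hR.le]
    refine setIntegral_congr_fun measurableSet_Ioc ?_
    intro t ht
    show Real.sin t / t = ∫ s in Ioi (0:ℝ), Real.exp (-(s*t)) * Real.sin t
    rw [integral_mul_const, expint ht.1, one_div, div_eq_inv_mul, mul_comm]
  rw [lhs_eq, swap]
  have inner_eq : ∀ s ∈ Ioi (0:ℝ),
      (∫ t in Ioc (0:ℝ) R, Real.exp (-(s*t)) * Real.sin t)
        = (1 + s^2)⁻¹ - Real.exp (-(s*R)) * (Real.cos R + s * Real.sin R) / (1 + s^2) := by
    intro s _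
    rw [← intervalIntegral.integral_of_le hR.le, lap, sub_div]
    congr 1
    · rw [one_div]
  rw [setIntegral_congr_fun measurableSet_Ioi inner_eq]
  rw [integral_sub (integrable_inv_one_add_sq.integrableOn) (err_integrable hR)]
  rw [integral_Ioi_inv_one_add_sq, Real.arctan_zero, sub_zero]

lemma err_tendsto :
    Tendsto (fun R => ∫ s in Ioi (0:ℝ),
      Real.exp (-(s*R)) * (Real.cos R + s * Real.sin R) / (1 + s^2)) atTop (nhds 0) := by
  refine squeeze_zero_norm' (a := fun R => 2 * (1/R)) ?_ ?_
  · filter_upwards [eventually_gt_atTop (0:ℝ)] with R hR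
    calc ‖∫ s in Ioi (0:ℝ), Real.exp (-(s*R)) * (Real.cos R + s * Real.sin R) / (1 + s^2)‖
        ≤ ∫ s in Ioi (0:ℝ), 2 * Real.exp (-(R*s)) := by
          refine norm_integral_le_of_norm_le ?_ ?_
          · have := exp_neg_integrableOn_Ioi 0 hR
            simpa [neg_mul] using this.const_mul 2
          · filter_upwards [self_mem_ae_restrict measurableSet_Ioi] with s hs
            exact err_bound hR (le_of_lt hs)
      _ = 2 * (1/R) := by
          rw [integral_const_mul]
          congr 1
          rw [← expint hR]
          congr 1; ext s; rw [mul_comm]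
  · have h := tendsto_inv_atTop_zero.const_mul (2:ℝ)
    rw [mul_zero] at h
    simpa [one_div] using h

lemma dirichlet :
    Tendsto (fun R => ∫ t in (0:ℝ)..R, Real.sin t / t) atTop (nhds (π/2)) := by
  have h1 : Tendsto (fun R => π/2 - ∫ s in Ioi (0:ℝ),
      Real.exp (-(s*R)) * (Real.cos R + s * Real.sin R) / (1 + s^2)) atTop (nhds (π/2 - 0)) :=
    tendsto_const_nhds.sub err_tendsto
  rw [sub_zero] at h1
  refine h1.congr' ?_
  filter_upwards [eventually_gt_atTop (0:ℝ)] with R hR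
  exact (key hR).symm

lemma sinc_ae : ∀ᵐ x : ℝ, _root_.sinc x = Real.sin (π * x) / (π * x) := by
  have h0 : (volume : Measure ℝ) {(0:ℝ)} = 0 := measure_singleton 0
  have : ∀ᵐ x : ℝ, x ≠ 0 := by
    rw [ae_iff]
    simpa using h0
  filter_upwards [this] with x hx
  simp [_root_.sinc, hx]

lemma sinc_int_eq (R : ℝ) :
    ∫ x in (-R)..R, _root_.sinc x = ∫ x in (-R)..R, Real.sin (π * x) / (π * x) := by
  apply intervalIntegral.integral_congr_ae
  filter_upwards [sinc_ae] with x hx _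
  exact hx

lemma abs_sin_le_abs (u : ℝ) : |Real.sin u| ≤ |u| := by
  rcases le_or_gt 0 u with h | h
  · rw [abs_of_nonneg h]; exact abs_sin_le_self h
  · have := abs_sin_le_self (neg_nonneg.mpr h.le)
    rw [Real.sin_neg, abs_neg] at this
    rw [abs_of_neg h]; exact this

lemma f_le_one (x : ℝ) : ‖Real.sin (π * x) / (π * x)‖ ≤ 1 := by
  rcases eq_or_ne x 0 with rfl | hx
  · simp
  · rw [Real.norm_eq_abs, abs_div, div_le_one (abs_pos.mpr (by positivity : π * x ≠ 0))]
    exact abs_sin_le_abs _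

lemma f_integrable (a b : ℝ) :
    IntervalIntegrable (fun x => Real.sin (π * x) / (π * x)) volume a b := by
  rw [intervalIntegrable_iff]
  refine Integrable.mono' (g := fun _ => (1:ℝ))
    (integrableOn_const measure_Ioc_lt_top.ne) ?_ ?_
  · have hm : Measurable fun x : ℝ => Real.sin (π * x) / (π * x) :=
      (Real.measurable_sin.comp (measurable_const.mul measurable_id)).div
        (measurable_const.mul measurable_id)
    exact hm.aestronglyMeasurable
  · filter_upwards with x
    exact f_le_one x

lemma even_split (R : ℝ) :
    ∫ x in (-R)..R, Real.sin (π * x) / (π * x)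
      = 2 * ∫ x in (0:ℝ)..R, Real.sin (π * x) / (π * x) := by
  have h1 : ∫ x in (-R)..(0:ℝ), Real.sin (π * x) / (π * x)
      = ∫ x in (0:ℝ)..R, Real.sin (π * x) / (π * x) := by
    have h2 := intervalIntegral.integral_comp_neg (a := (0:ℝ)) (b := R)
      (fun x => Real.sin (π * x) / (π * x))
    simp only [mul_neg, Real.sin_neg, neg_div_neg_eq, neg_zero] at h2
    exact h2.symm
  rw [← intervalIntegral.integral_add_adjacent_intervals (f_integrable (-R) 0)
    (f_integrable 0 R), h1, two_mul]

lemma comp_eq (R : ℝ) :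
    ∫ x in (0:ℝ)..R, Real.sin (π * x) / (π * x)
      = π⁻¹ * ∫ t in (0:ℝ)..(π * R), Real.sin t / t := by
  have := intervalIntegral.integral_comp_mul_left (fun t => Real.sin t / t)
    (c := π) (a := (0:ℝ)) (b := R) Real.pi_ne_zero
  rw [mul_zero] at this
  rw [this, smul_eq_mul]

theorem sinc_integral_eq_one :
    Tendsto (fun R : ℝ => ∫ x in (-R)..R, _root_.sinc x) atTop (nhds 1) := by
  have hcomp : Tendsto (fun R : ℝ => π * R) atTop atTop :=
    Tendsto.const_mul_atTop Real.pi_pos tendsto_id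
  have h := (dirichlet.comp hcomp).const_mul (2 * π⁻¹)
  have hval : 2 * π⁻¹ * (π/2) = 1 := by
    field_simp
  rw [hval] at h
  refine h.congr ?_
  intro R
  rw [sinc_int_eq, even_split, comp_eq, Function.comp]
  ring
end

section
/- For every natural number n ≥ 1, the principal value integral ∫_{-∞}^{∞} sin(πα) / (α·(1−α)(2−α)⋯(n−α)) dα equals π·2^n / n!. -/
open Real Finset MeasureTheory

open FourierTransform

noncomputable def sdp (n : ℕ) (α : ℝ) : ℝ :=
  Real.sin (Real.pi * α) / (α * ∏ j ∈ Finset.Icc 1 n, ((j : ℝ) - α))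

lemma icc_insert (n : ℕ) : Finset.Icc 0 n = insert 0 (Finset.Icc 1 n) := by
  ext k; simp; omega

lemma abs_denom (n : ℕ) (α : ℝ) :
    |α * ∏ j ∈ Finset.Icc 1 n, ((j : ℝ) - α)| = ∏ j ∈ Finset.Icc 0 n, |(j : ℝ) - α| := by
  rw [icc_insert, Finset.prod_insert (by simp), abs_mul, Finset.abs_prod]
  simp

lemma sdp_bound (n : ℕ) (α : ℝ) : |sdp n α| ≤ Real.pi * 2 ^ n := by
  have hpi := Real.pi_pos
  by_cases hden : α * ∏ j ∈ Finset.Icc 1 n, ((j : ℝ) - α) = 0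
  · rw [sdp, hden, div_zero, abs_zero]
    positivity
  · -- denominator nonzero
    have hne : ∀ j ∈ Finset.Icc 0 n, ((j : ℝ) - α) ≠ 0 := by
      intro j hj
      rcases Finset.mem_Icc.mp hj with ⟨-, hj2⟩
      rcases Nat.eq_zero_or_pos j with rfl | hj1
      · simp only [Nat.cast_zero, zero_sub, neg_ne_zero]
        intro h; exact hden (by rw [h, zero_mul])
      · intro h
        apply hden
        rw [mul_eq_zero]; right
        exact Finset.prod_eq_zero (Finset.mem_Icc.mpr ⟨hj1, hj2⟩) h
    obtain ⟨j, hjs, hjmin⟩ := Finset.exists_min_image (Finset.Icc 0 n)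
      (fun i => |α - (i : ℝ)|) ⟨0, by simp⟩
    -- sin bound
    have hsin : |Real.sin (Real.pi * α)| ≤ Real.pi * |α - (j : ℝ)| := by
      have h1 : Real.pi * α = Real.pi * (α - j) + (j : ℕ) * Real.pi := by push_cast; ring
      rw [h1, Real.sin_add_nat_mul_pi, abs_mul, abs_pow, abs_neg, abs_one, one_pow, one_mul]
      calc |Real.sin (Real.pi * (α - j))| ≤ |Real.pi * (α - j)| := Real.abs_sin_le_abs
        _ = Real.pi * |α - j| := by rw [abs_mul, abs_of_pos hpi]
    -- product split
    set P : ℝ := ∏ i ∈ (Finset.Icc 0 n).erase j, |(i : ℝ) - α| with hP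
    have hsplit : ∏ i ∈ Finset.Icc 0 n, |(i : ℝ) - α| = P * |(j : ℝ) - α| :=
      (Finset.prod_erase_mul _ _ hjs).symm
    have hfac : ∀ i ∈ (Finset.Icc 0 n).erase j, (1/2 : ℝ) ≤ |(i : ℝ) - α| := by
      intro i hi
      have hij : i ≠ j := (Finset.mem_erase.mp hi).1
      have his : i ∈ Finset.Icc 0 n := (Finset.mem_erase.mp hi).2
      have h1 : (1 : ℝ) ≤ |(i : ℝ) - (j : ℝ)| := by
        have : ((i : ℤ)) - (j : ℤ) ≠ 0 := sub_ne_zero.mpr (by exact_mod_cast hij)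
        have := Int.one_le_abs this
        have h2 : ((|(i : ℤ) - (j : ℤ)| : ℤ) : ℝ) = |(i : ℝ) - (j : ℝ)| := by
          push_cast; rfl
        rw [← h2]; exact_mod_cast this
      have htri : |(i : ℝ) - (j : ℝ)| ≤ |(i : ℝ) - α| + |α - (j : ℝ)| := by
        calc |(i : ℝ) - (j : ℝ)| = |((i : ℝ) - α) + (α - j)| := by ring_nf
          _ ≤ |(i : ℝ) - α| + |α - (j : ℝ)| := abs_add_le _ _
      have hmin := hjmin i his
      have : (1 : ℝ) ≤ 2 * |(i : ℝ) - α| := by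
        have h3 : |α - (i : ℝ)| = |(i : ℝ) - α| := abs_sub_comm _ _
        nlinarith [hmin, htri, h1]
      linarith
    have hPbig : ((1:ℝ)/2) ^ n ≤ P := by
      have hcard : ((Finset.Icc 0 n).erase j).card = n := by
        rw [Finset.card_erase_of_mem hjs, Nat.card_Icc]; omega
      calc ((1:ℝ)/2) ^ n = ∏ _i ∈ (Finset.Icc 0 n).erase j, ((1:ℝ)/2) := by
            rw [Finset.prod_const, hcard]
        _ ≤ P := Finset.prod_le_prod (fun _ _ => by norm_num) hfac
    have hPpos : 0 < P := lt_of_lt_of_le (by positivity) hPbig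
    have hjne : |(j : ℝ) - α| ≠ 0 := abs_ne_zero.mpr (hne j hjs)
    have hjpos : 0 < |(j : ℝ) - α| := lt_of_le_of_ne (abs_nonneg _) (Ne.symm hjne)
    rw [sdp, abs_div, abs_denom, hsplit]
    rw [div_le_iff₀ (by positivity)]
    calc |Real.sin (Real.pi * α)| ≤ Real.pi * |α - (j : ℝ)| := hsin
      _ = Real.pi * |(j : ℝ) - α| := by rw [abs_sub_comm]
      _ ≤ (Real.pi * 2 ^ n * P) * |(j : ℝ) - α| := by
          have : Real.pi ≤ Real.pi * 2 ^ n * P := by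
            calc Real.pi = Real.pi * 2 ^ n * ((1:ℝ)/2)^n := by
                  rw [mul_assoc, ← mul_pow]; norm_num
              _ ≤ Real.pi * 2 ^ n * P := by
                  apply mul_le_mul_of_nonneg_left hPbig (by positivity)
          exact mul_le_mul_of_nonneg_right this (le_of_lt hjpos)
      _ = Real.pi * 2 ^ n * (P * |(j : ℝ) - α|) := by ring

lemma sdp_tail (n : ℕ) (hn : 1 ≤ n) (α : ℝ) (hα : 2 * ((n : ℝ) + 1) < |α|) :
    |sdp n α| ≤ 4 / α ^ 2 := by
  have hn1 : (1:ℝ) ≤ (n:ℝ) := by exact_mod_cast hn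
  have hd2 : (0:ℝ) < |α| - n := by linarith
  have h1 : ∀ i ∈ Finset.Icc 0 n, |α| - (n : ℝ) ≤ |(i : ℝ) - α| := by
    intro i hi
    have hi2 : (i : ℝ) ≤ (n : ℝ) := by exact_mod_cast (Finset.mem_Icc.mp hi).2
    have h3 : |α| - |(i:ℝ)| ≤ |α - (i : ℝ)| := abs_sub_abs_le_abs_sub _ _
    have h4 : |(i:ℝ)| = (i:ℝ) := abs_of_nonneg (by positivity)
    rw [abs_sub_comm] at h3
    linarith
  have hprod : (|α| - n) ^ (n + 1) ≤ ∏ j ∈ Finset.Icc 0 n, |(j : ℝ) - α| := by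
    calc (|α| - n) ^ (n + 1) = ∏ _j ∈ Finset.Icc 0 n, (|α| - (n:ℝ)) := by
          rw [Finset.prod_const, Nat.card_Icc]; norm_num
        _ ≤ _ := Finset.prod_le_prod (fun _ _ => le_of_lt hd2) h1
  have hpow : (|α| - n) ^ 2 ≤ (|α| - n) ^ (n + 1) :=
    pow_le_pow_right₀ (by linarith) (by omega)
  have hhalf : α ^ 2 / 4 ≤ (|α| - n) ^ 2 := by
    have h5 : |α| / 2 ≤ |α| - n := by linarith
    have h6 : (0:ℝ) ≤ |α| / 2 := by positivity
    have := mul_self_le_mul_self h6 h5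
    nlinarith [abs_mul_abs_self α]
  have hα2 : (0:ℝ) < α ^ 2 := by nlinarith [abs_mul_abs_self α, abs_nonneg α]
  have hDpos : (0:ℝ) < ∏ j ∈ Finset.Icc 0 n, |(j : ℝ) - α| := by
    calc (0:ℝ) < α ^ 2 / 4 := by linarith
      _ ≤ _ := le_trans hhalf (le_trans hpow hprod)
  rw [sdp, abs_div, abs_denom]
  rw [div_le_div_iff₀ hDpos hα2]
  calc |Real.sin (Real.pi * α)| * α ^ 2 ≤ 1 * α ^ 2 := by
        apply mul_le_mul_of_nonneg_right (Real.abs_sin_le_one _) (le_of_lt hα2)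
    _ = 4 * (α ^ 2 / 4) := by ring
    _ ≤ 4 * ∏ j ∈ Finset.Icc 0 n, |(j : ℝ) - α| := by
        apply mul_le_mul_of_nonneg_left _ (by norm_num)
        exact le_trans hhalf (le_trans hpow hprod)

lemma sdp_integrable (n : ℕ) (hn : 1 ≤ n) : Integrable (sdp n) := by
  have hpi := Real.pi_pos
  set C : ℝ := Real.pi * 2 ^ n * (1 + (2 * ((n:ℝ) + 1)) ^ 2) + 8 with hC
  have hmeas : AEStronglyMeasurable (sdp n) volume := by
    apply Measurable.aestronglyMeasurable
    unfold sdp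
    fun_prop
  apply Integrable.mono ((integrable_inv_one_add_sq).const_mul C) hmeas
  filter_upwards with α
  have hpos : (0:ℝ) < 1 + α ^ 2 := by positivity
  have hCg : ‖C * (1 + α ^ 2)⁻¹‖ = C * (1 + α ^ 2)⁻¹ := by
    rw [Real.norm_eq_abs, abs_of_nonneg]
    have hC8 : (0:ℝ) ≤ C := by positivity
    positivity
  rw [hCg, Real.norm_eq_abs]
  rcases le_or_gt (|α|) (2 * ((n : ℝ) + 1)) with hcase | hcase
  · calc |sdp n α| ≤ Real.pi * 2 ^ n := sdp_bound n α
      _ ≤ C * (1 + α ^ 2)⁻¹ := by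
          rw [← div_eq_mul_inv, le_div_iff₀ hpos]
          have h1 : α ^ 2 ≤ (2 * ((n:ℝ) + 1)) ^ 2 := by
            have := mul_self_le_mul_self (abs_nonneg α) hcase
            nlinarith [abs_mul_abs_self α]
          rw [hC]
          nlinarith [pow_pos (by norm_num : (0:ℝ) < 2) n, mul_pos hpi (pow_pos (by norm_num : (0:ℝ) < 2) n)]
  · have h2 : |sdp n α| ≤ 4 / α ^ 2 := sdp_tail n hn α hcase
    have hα1 : (1:ℝ) ≤ α ^ 2 := by
      have : (1:ℝ) ≤ |α| := by
        have : (0:ℝ) ≤ (n:ℝ) := by positivity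
        linarith
      nlinarith [abs_mul_abs_self α, abs_nonneg α]
    have hα2 : (0:ℝ) < α ^ 2 := by nlinarith
    calc |sdp n α| ≤ 4 / α ^ 2 := h2
      _ ≤ 8 / (1 + α ^ 2) := by
          rw [div_le_div_iff₀ hα2 hpos]; nlinarith
      _ ≤ C / (1 + α ^ 2) := by
          gcongr
          rw [hC]
          nlinarith [mul_nonneg (mul_nonneg hpi.le (pow_nonneg (by norm_num : (0:ℝ) ≤ 2) n))
            (by positivity : (0:ℝ) ≤ 1 + (2 * ((n:ℝ) + 1)) ^ 2)]
      _ = C * (1 + α ^ 2)⁻¹ := div_eq_mul_inv _ _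

lemma sdp_step (n : ℕ) (α : ℝ) (hα : ∀ k : ℕ, ((k : ℝ)) ≠ α) :
    sdp (n + 1) α = (1 / ((n : ℝ) + 1)) * (sdp n α + sdp n (((n : ℝ) + 1) - α)) := by
  have hP : ∀ j ∈ Finset.Icc 1 n, ((j : ℝ) - α) ≠ 0 :=
    fun j _ => sub_ne_zero.mpr (hα j)
  have hPne : (∏ j ∈ Finset.Icc 1 n, ((j : ℝ) - α)) ≠ 0 := Finset.prod_ne_zero_iff.mpr hP
  have hα0 : α ≠ 0 := fun h => hα 0 (by simp [h])
  have hαn : ((n : ℝ) + 1) - α ≠ 0 := by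
    have := hα (n + 1); push_cast at this
    exact sub_ne_zero.mpr this
  -- top product split
  have hsplit : ∏ j ∈ Finset.Icc 1 (n + 1), ((j : ℝ) - α)
      = (∏ j ∈ Finset.Icc 1 n, ((j : ℝ) - α)) * (((n : ℝ) + 1) - α) := by
    rw [Finset.prod_Icc_succ_top (by omega)]
    push_cast; ring
  -- sin of reflected point
  have hsin : Real.sin (Real.pi * (((n : ℝ) + 1) - α))
      = (-1 : ℝ) ^ n * Real.sin (Real.pi * α) := by
    have h1 : Real.pi * (((n : ℝ) + 1) - α) = (-(Real.pi * α)) + ((n + 1 : ℕ) : ℝ) * Real.pi := by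
      push_cast; ring
    rw [h1, Real.sin_add_nat_mul_pi, Real.sin_neg]
    rw [pow_succ]
    ring
  -- reflected product
  have hprod : ∏ j ∈ Finset.Icc 1 n, ((j : ℝ) - (((n : ℝ) + 1) - α))
      = (-1 : ℝ) ^ n * ∏ j ∈ Finset.Icc 1 n, ((j : ℝ) - α) := by
    have h2 : ∏ j ∈ Finset.Icc 1 n, ((j : ℝ) - (((n : ℝ) + 1) - α))
        = ∏ j ∈ Finset.Icc 1 n, (α - (j : ℝ)) := by
      apply Finset.prod_nbij' (fun j => n + 1 - j) (fun j => n + 1 - j)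
      · intro a ha; simp only [Finset.mem_Icc] at *; omega
      · intro a ha; simp only [Finset.mem_Icc] at *; omega
      · intro a ha; simp only [Finset.mem_Icc] at *; omega
      · intro a ha; simp only [Finset.mem_Icc] at *; omega
      · intro j hj
        simp only [Finset.mem_Icc] at hj
        have : ((n + 1 - j : ℕ) : ℝ) = (n : ℝ) + 1 - (j : ℝ) := by
          push_cast [Nat.cast_sub (by omega : j ≤ n + 1)]; ring
        rw [this]; ring
    rw [h2]
    have h3 : ∀ j ∈ Finset.Icc 1 n, (α - (j : ℝ)) = -1 * ((j : ℝ) - α) := fun j _ => by ring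
    rw [Finset.prod_congr rfl h3, Finset.prod_mul_distrib, Finset.prod_const]
    simp [Nat.card_Icc]
  unfold sdp
  rw [hsplit, hsin, hprod]
  have hm1 : ((-1 : ℝ) ^ n) ≠ 0 := pow_ne_zero _ (by norm_num)
  have hn1 : ((n : ℝ) + 1) ≠ 0 := by positivity
  field_simp
  ring

lemma sdp_one (α : ℝ) : sdp 1 α = Real.sin (Real.pi * α) / (α * (1 - α)) := by
  rw [sdp, Finset.Icc_self, Finset.prod_singleton]; norm_num

/-- helper: ∫_{-1/2}^{1/2} e^{i a t} dt = 2 sin(a/2)/a -/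

lemma exp_pulse_integral (a : ℝ) (ha : a ≠ 0) :
    ∫ t in (-(1/2) : ℝ)..(1/2), Complex.exp (((a * t : ℝ)) * Complex.I)
      = ((2 * Real.sin (a / 2) / a : ℝ) : ℂ) := by
  have h1 : ∀ t : ℝ, (((a * t : ℝ) : ℂ) * Complex.I) = ((a : ℂ) * Complex.I) * (t : ℂ) := by
    intro t; push_cast; ring
  simp_rw [h1]
  rw [integral_exp_mul_complex (mul_ne_zero (Complex.ofReal_ne_zero.mpr ha) Complex.I_ne_zero)]
  have h2 : (a : ℂ) * Complex.I * ((1/2 : ℝ) : ℂ) = ((a/2 : ℝ) : ℂ) * Complex.I := by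
    push_cast; ring
  have h3 : (a : ℂ) * Complex.I * ((-(1/2) : ℝ) : ℂ) = ((-(a/2) : ℝ) : ℂ) * Complex.I := by
    push_cast; ring
  rw [h2, h3, Complex.exp_mul_I, Complex.exp_mul_I]
  rw [← Complex.ofReal_cos, ← Complex.ofReal_sin, ← Complex.ofReal_cos, ← Complex.ofReal_sin]
  rw [Real.cos_neg, Real.sin_neg]
  have h4 : ((Real.cos (a/2) : ℝ) : ℂ) + ((Real.sin (a/2) : ℝ) : ℂ) * Complex.I -
      (((Real.cos (a/2) : ℝ) : ℂ) + ((-Real.sin (a/2) : ℝ) : ℂ) * Complex.I)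
      = (((2 * Real.sin (a/2) : ℝ)) : ℂ) * Complex.I := by
    push_cast; ring
  rw [h4, mul_div_mul_right _ _ Complex.I_ne_zero]
  norm_cast

noncomputable def pulse : ℝ → ℂ :=
  Set.indicator (Set.Icc (-(1/2) : ℝ) (1/2)) (fun t => ((Real.pi * Real.cos (Real.pi * t) : ℝ) : ℂ))

lemma pulse_fourier (ξ : ℝ) (h1 : (1 : ℝ) - 2 * ξ ≠ 0) (h2 : (1 : ℝ) + 2 * ξ ≠ 0) :
    𝓕 pulse ξ = ((2 * Real.cos (Real.pi * ξ) / ((1 - 2*ξ) * (1 + 2*ξ)) : ℝ) : ℂ) := by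
  have hpi := Real.pi_pos
  rw [Real.fourier_real_eq_integral_exp_smul]
  have hind : (fun v : ℝ => Complex.exp ((( -2 * Real.pi * v * ξ : ℝ)) * Complex.I) • pulse v)
      = Set.indicator (Set.Icc (-(1/2) : ℝ) (1/2))
        (fun v => Complex.exp (((-2 * Real.pi * v * ξ : ℝ)) * Complex.I) *
          ((Real.pi * Real.cos (Real.pi * v) : ℝ) : ℂ)) := by
    funext v
    by_cases hv : v ∈ Set.Icc (-(1/2) : ℝ) (1/2)
    · rw [Set.indicator_of_mem hv, pulse, Set.indicator_of_mem hv, smul_eq_mul]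
    · rw [Set.indicator_of_notMem hv, pulse, Set.indicator_of_notMem hv, smul_zero]
  rw [hind, MeasureTheory.integral_indicator measurableSet_Icc,
    MeasureTheory.integral_Icc_eq_integral_Ioc,
    ← intervalIntegral.integral_of_le (by norm_num : (-(1/2) : ℝ) ≤ 1/2)]
  -- decompose the integrand
  have hdecomp : ∀ t : ℝ, Complex.exp (((-2 * Real.pi * t * ξ : ℝ)) * Complex.I) *
      ((Real.pi * Real.cos (Real.pi * t) : ℝ) : ℂ)
      = ((Real.pi / 2 : ℝ) : ℂ) *
        (Complex.exp (((Real.pi * (1 - 2*ξ) * t : ℝ)) * Complex.I)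
          + Complex.exp (((-(Real.pi * (1 + 2*ξ)) * t : ℝ)) * Complex.I)) := by
    intro t
    have e1 : ((Real.pi * t : ℝ) : ℂ) * Complex.I + ((-2 * Real.pi * t * ξ : ℝ)) * Complex.I
        = ((Real.pi * (1 - 2*ξ) * t : ℝ)) * Complex.I := by push_cast; ring
    have e2 : (-((Real.pi * t : ℝ) : ℂ)) * Complex.I + ((-2 * Real.pi * t * ξ : ℝ)) * Complex.I
        = ((-(Real.pi * (1 + 2*ξ)) * t : ℝ)) * Complex.I := by push_cast; ring
    have hc : ((Real.pi * Real.cos (Real.pi * t) : ℝ) : ℂ)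
        = (Real.pi : ℂ) * Complex.cos ((Real.pi * t : ℝ) : ℂ) := by
      rw [Complex.ofReal_mul, Complex.ofReal_cos]
    calc Complex.exp (((-2 * Real.pi * t * ξ : ℝ)) * Complex.I) *
          ((Real.pi * Real.cos (Real.pi * t) : ℝ) : ℂ)
        = ((Real.pi / 2 : ℝ) : ℂ) *
          (Complex.exp (((Real.pi * t : ℝ) : ℂ) * Complex.I + ((-2 * Real.pi * t * ξ : ℝ)) * Complex.I)
            + Complex.exp ((-((Real.pi * t : ℝ) : ℂ)) * Complex.I + ((-2 * Real.pi * t * ξ : ℝ)) * Complex.I)) := by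
          rw [hc, Complex.cos, Complex.exp_add, Complex.exp_add]
          push_cast; ring
      _ = _ := by rw [e1, e2]
  simp_rw [hdecomp]
  rw [intervalIntegral.integral_const_mul]
  have hi1 : IntervalIntegrable
      (fun t : ℝ => Complex.exp (((Real.pi * (1 - 2*ξ) * t : ℝ)) * Complex.I))
      volume (-(1/2)) (1/2) := by
    apply Continuous.intervalIntegrable; fun_prop
  have hi2 : IntervalIntegrable
      (fun t : ℝ => Complex.exp (((-(Real.pi * (1 + 2*ξ)) * t : ℝ)) * Complex.I))
      volume (-(1/2)) (1/2) := by
    apply Continuous.intervalIntegrable; fun_prop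
  rw [intervalIntegral.integral_add hi1 hi2]
  rw [exp_pulse_integral _ (mul_ne_zero hpi.ne' h1),
    exp_pulse_integral _ (neg_ne_zero.mpr (mul_ne_zero hpi.ne' h2))]
  -- now all real
  have hs1 : Real.sin (Real.pi * (1 - 2*ξ) / 2) = Real.cos (Real.pi * ξ) := by
    have : Real.pi * (1 - 2*ξ) / 2 = Real.pi / 2 - Real.pi * ξ := by ring
    rw [this, Real.sin_pi_div_two_sub]
  have hs2 : Real.sin (-(Real.pi * (1 + 2*ξ)) / 2) = -Real.cos (Real.pi * ξ) := by
    have : -(Real.pi * (1 + 2*ξ)) / 2 = -(Real.pi * ξ + Real.pi / 2) := by ring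
    rw [this, Real.sin_neg, Real.sin_add_pi_div_two]
  rw [hs1, hs2]
  rw [← Complex.ofReal_add, ← Complex.ofReal_mul]
  congr 1
  field_simp
  ring

lemma r_eq (ξ : ℝ) :
    2 * Real.cos (Real.pi * ξ) / ((1 - 2*ξ) * (1 + 2*ξ)) = (1/2) * sdp 1 (ξ + 1/2) := by
  rw [sdp_one]
  have hsin : Real.sin (Real.pi * (ξ + 1/2)) = Real.cos (Real.pi * ξ) := by
    rw [show Real.pi * (ξ + 1/2) = Real.pi * ξ + Real.pi/2 by ring, Real.sin_add_pi_div_two]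
  rw [hsin]
  by_cases hm : ξ = 1/2
  · subst hm; norm_num
  by_cases hp : ξ = -(1/2)
  · subst hp; norm_num
  · have h1 : (1:ℝ) - 2*ξ ≠ 0 := fun h => hm (by linarith)
    have h2 : (1:ℝ) + 2*ξ ≠ 0 := fun h => hp (by linarith)
    have h3 : ξ + 1/2 ≠ 0 := fun h => hp (by linarith)
    have h4 : 1 - (ξ + 1/2) ≠ 0 := fun h => hm (by linarith)
    rw [show (ξ + 1/2) * (1 - (ξ + 1/2)) = ((1 - 2*ξ) * (1 + 2*ξ))/4 by ring,
      div_div_eq_mul_div]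
    ring

lemma pulse_integrable : Integrable pulse := by
  apply MeasureTheory.IntegrableOn.integrable_indicator _ measurableSet_Icc
  exact (Continuous.integrableOn_Icc (by fun_prop))

lemma pulse_continuousAt : ContinuousAt pulse 0 := by
  have hcont : ContinuousAt (fun t : ℝ => ((Real.pi * Real.cos (Real.pi * t) : ℝ) : ℂ)) 0 := by
    fun_prop
  apply hcont.congr
  have hmem : Set.Ioo (-(1/2) : ℝ) (1/2) ∈ nhds (0:ℝ) :=
    isOpen_Ioo.mem_nhds (by norm_num)
  filter_upwards [hmem] with t ht
  rw [pulse, Set.indicator_of_mem (Set.Ioo_subset_Icc_self ht)]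

lemma sdp_one_integral : ∫ α : ℝ, sdp 1 α = 2 * Real.pi := by
  have hsdp1 : Integrable (sdp 1) := sdp_integrable 1 le_rfl
  have hg : Integrable (fun ξ : ℝ => (1/2) * sdp 1 (ξ + 1/2)) :=
    (hsdp1.comp_add_right (1/2)).const_mul _
  have hae : 𝓕 pulse =ᵐ[volume] (fun ξ : ℝ => (((1/2) * sdp 1 (ξ + 1/2) : ℝ) : ℂ)) := by
    have h0 : volume ({1/2, -(1/2)} : Set ℝ) = 0 :=
      (Set.toFinite _).measure_zero _
    filter_upwards [measure_eq_zero_iff_ae_notMem.mp h0] with ξ hξ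
    simp only [Set.mem_insert_iff, Set.mem_singleton_iff, not_or] at hξ
    have h1 : (1:ℝ) - 2*ξ ≠ 0 := fun h => hξ.1 (by linarith)
    have h2 : (1:ℝ) + 2*ξ ≠ 0 := fun h => hξ.2 (by linarith)
    rw [pulse_fourier ξ h1 h2, r_eq]
  have hft_int : Integrable (𝓕 pulse) := (hg.ofReal (𝕜 := ℂ)).congr hae.symm
  have hinv := MeasureTheory.Integrable.fourierInv_fourier_eq pulse_integrable hft_int pulse_continuousAt
  have h0 : 𝓕⁻ (𝓕 pulse) 0 = ∫ v, 𝓕 pulse v := by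
    rw [Real.fourierInv_eq']
    simp
  have hp0 : pulse 0 = ((Real.pi : ℝ) : ℂ) := by
    rw [pulse, Set.indicator_of_mem (by norm_num : (0:ℝ) ∈ Set.Icc (-(1/2):ℝ) (1/2))]
    norm_num
  rw [h0, hp0] at hinv
  rw [integral_congr_ae hae] at hinv
  have h2 : (∫ a : ℝ, (((1/2) * sdp 1 (a + 1/2) : ℝ) : ℂ))
      = (((∫ a : ℝ, (1/2) * sdp 1 (a + 1/2)) : ℝ) : ℂ) := integral_ofReal
  rw [h2] at hinv
  have hreal : ∫ ξ : ℝ, (1/2) * sdp 1 (ξ + 1/2) = Real.pi := Complex.ofReal_inj.mp hinv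
  rw [integral_const_mul, integral_add_right_eq_self (sdp 1) (1/2)] at hreal
  linarith

theorem integral_sin_div_poly (n : ℕ) (hn : 1 ≤ n) :
    ∫ α : ℝ, Real.sin (Real.pi * α) / (α * ∏ j ∈ Finset.Icc 1 n, ((j : ℝ) - α)) =
      Real.pi * 2 ^ n / (n.factorial : ℝ) := by
  have key : ∀ m : ℕ, 1 ≤ m → ∫ α : ℝ, sdp m α = Real.pi * 2 ^ m / (m.factorial : ℝ) := by
    intro m hm
    induction m, hm using Nat.le_induction with
    | base =>
      rw [sdp_one_integral]
      simp [Nat.factorial]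
      ring
    | succ n hn ih =>
      have hint := sdp_integrable n hn
      have hrefl : Integrable (fun α : ℝ => sdp n (((n:ℝ) + 1) - α)) := hint.comp_sub_left _
      have hae : (fun α : ℝ => sdp (n+1) α) =ᵐ[volume]
          (fun α : ℝ => (1 / ((n:ℝ) + 1)) * (sdp n α + sdp n (((n:ℝ) + 1) - α))) := by
        have h0 : volume (Set.range ((↑·) : ℕ → ℝ)) = 0 :=
          (Set.countable_range _).measure_zero _
        filter_upwards [measure_eq_zero_iff_ae_notMem.mp h0] with α hα
        exact sdp_step n α (fun k h => hα ⟨k, h⟩)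
      have hfact : ((n.factorial : ℝ)) ≠ 0 := Nat.cast_ne_zero.mpr n.factorial_ne_zero
      have hn1 : ((n:ℝ) + 1) ≠ 0 := by positivity
      calc ∫ α : ℝ, sdp (n+1) α
          = ∫ α : ℝ, (1 / ((n:ℝ) + 1)) * (sdp n α + sdp n (((n:ℝ) + 1) - α)) :=
            integral_congr_ae hae
        _ = (1 / ((n:ℝ) + 1)) * ((∫ α : ℝ, sdp n α) + ∫ α : ℝ, sdp n (((n:ℝ) + 1) - α)) := by
            rw [integral_const_mul, integral_add hint hrefl]
        _ = (1 / ((n:ℝ) + 1)) * (Real.pi * 2 ^ n / (n.factorial : ℝ)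
              + Real.pi * 2 ^ n / (n.factorial : ℝ)) := by
            rw [integral_sub_left_eq_self (sdp n) volume ((n:ℝ) + 1), ih]
        _ = Real.pi * 2 ^ (n+1) / ((n+1).factorial : ℝ) := by
            rw [Nat.factorial_succ]
            push_cast
            field_simp
            ring
  exact key n hn
end

section
/- For every natural number n ≥ 1, the improper integral over ℝ of the generalized binomial coefficient α ↦ Γ(n+1) / (Γ(n+1−α)·Γ(1+α)) equals 2^n. -/
open Real MeasureTheory

noncomputable def Fb (n : ℕ) (α : ℝ) : ℝ :=
  Real.Gamma ((n : ℝ) + 1) / (Real.Gamma ((n : ℝ) + 1 - α) * Real.Gamma (1 + α))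

lemma gamma_ne_zero_of_not_int {x : ℝ} (hx : ∀ m : ℤ, x ≠ m) : Real.Gamma x ≠ 0 := by
  rw [Ne, Real.Gamma_eq_zero_iff]
  rintro ⟨m, rfl⟩
  exact hx (-m) (by push_cast; ring)

lemma pascal (n : ℕ) (α : ℝ) : Fb (n+1) α = Fb n α + Fb n (α - 1) := by
  unfold Fb
  push_cast
  by_cases hA : Real.Gamma (1 + α) = 0
  · -- α is a negative integer
    obtain ⟨m, hm⟩ := (Real.Gamma_eq_zero_iff _).mp hA
    have hα : α = -(m:ℝ) - 1 := by linarith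
    have h1 : Real.Gamma (1 + (α - 1)) = 0 := by
      rw [Real.Gamma_eq_zero_iff]; exact ⟨m + 1, by push_cast; linarith⟩
    rw [hA, h1]; simp
  · by_cases h0 : α = 0
    · subst h0
      simp only [sub_zero, zero_sub, add_zero]
      rw [show (1:ℝ) + -1 = 0 by ring, Real.Gamma_zero, mul_zero, div_zero, add_zero,
        Real.Gamma_one, mul_one, mul_one,
        div_self (Real.Gamma_pos_of_pos (by positivity : (0:ℝ) < (n:ℝ)+1+1)).ne',
        div_self (Real.Gamma_pos_of_pos (by positivity : (0:ℝ) < (n:ℝ)+1)).ne']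
    by_cases hB : Real.Gamma ((n:ℝ) + 1 + 1 - α) = 0
    · -- α ∈ {n+2, n+3, ...} or α = n+1 handled separately? Gamma (n+2-α) = 0 ⇒ α = n+2+m
      obtain ⟨m, hm⟩ := (Real.Gamma_eq_zero_iff _).mp hB
      have hα : α = (n:ℝ) + 2 + m := by push_cast at hm ⊢; linarith
      have h1 : Real.Gamma ((n:ℝ) + 1 - α) = 0 := by
        rw [Real.Gamma_eq_zero_iff]; exact ⟨m + 1, by push_cast; linarith⟩
      have h2 : Real.Gamma ((n:ℝ) + 1 - (α - 1)) = 0 := by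
        rw [Real.Gamma_eq_zero_iff]; exact ⟨m, by push_cast; linarith⟩
      rw [hB, h1, h2]; simp
    by_cases hn1 : α = (n:ℝ) + 1
    · subst hn1
      rw [show (n:ℝ) + 1 + 1 - ((n:ℝ)+1) = 1 by ring, show (n:ℝ) + 1 - ((n:ℝ)+1) = 0 by ring,
        show (n:ℝ) + 1 - ((n:ℝ)+1-1) = 1 by ring, show (1:ℝ) + ((n:ℝ)+1-1) = (n:ℝ)+1 by ring,
        show (1:ℝ) + ((n:ℝ)+1) = (n:ℝ)+1+1 by ring,
        Real.Gamma_zero, Real.Gamma_one, zero_mul, div_zero, zero_add, one_mul, one_mul]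
      rw [div_self (Real.Gamma_pos_of_pos (by positivity : (0:ℝ) < (n:ℝ)+1+1)).ne',
        div_self (Real.Gamma_pos_of_pos (by positivity : (0:ℝ) < (n:ℝ)+1)).ne']
    · -- generic case
      have hGα : Real.Gamma α ≠ 0 := by
        intro h
        apply hA
        rw [show (1:ℝ) + α = α + 1 by ring, Real.Gamma_add_one h0, h, mul_zero]
      have hC : Real.Gamma ((n:ℝ) + 1 - α) ≠ 0 := by
        intro h
        apply hB
        rw [show (n:ℝ) + 1 + 1 - α = ((n:ℝ) + 1 - α) + 1 by ring,
          Real.Gamma_add_one (by intro h'; apply hn1; linarith), h, mul_zero]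
      have e1 : Real.Gamma ((n:ℝ) + 1 + 1) = ((n:ℝ)+1) * Real.Gamma ((n:ℝ)+1) := by
        rw [Real.Gamma_add_one (by positivity)]
      have e2 : Real.Gamma ((n:ℝ) + 1 + 1 - α) = ((n:ℝ)+1-α) * Real.Gamma ((n:ℝ)+1-α) := by
        rw [show (n:ℝ) + 1 + 1 - α = ((n:ℝ) + 1 - α) + 1 by ring,
          Real.Gamma_add_one (by intro h'; apply hn1; linarith)]
      have e3 : Real.Gamma (1 + α) = α * Real.Gamma α := by
        rw [show (1:ℝ) + α = α + 1 by ring, Real.Gamma_add_one h0]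
      have e4 : Real.Gamma ((n:ℝ) + 1 - (α - 1)) = ((n:ℝ)+1-α) * Real.Gamma ((n:ℝ)+1-α) := by
        rw [show (n:ℝ) + 1 - (α - 1) = ((n:ℝ) + 1 - α) + 1 by ring,
          Real.Gamma_add_one (by intro h'; apply hn1; linarith)]
      have e5 : (1:ℝ) + (α - 1) = α := by ring
      rw [e1, e2, e3, e4, e5]
      have hna : (n:ℝ) + 1 - α ≠ 0 := by intro h'; apply hn1; linarith
      field_simp
      ring
noncomputable def h1 (α : ℝ) : ℝ := Real.sin (π * α) / (π * α * (1 - α))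

lemma abs_h1_le (α : ℝ) : |h1 α| ≤ 10 * (1 + α^2)⁻¹ := by
  have hπ : (0:ℝ) < π := Real.pi_pos
  by_cases h0 : α = 0
  · subst h0; simp [h1]
  by_cases h1' : α = 1
  · subst h1'; simp [h1]
  have habs : |h1 α| = |Real.sin (π * α)| / (π * |α| * |1 - α|) := by
    rw [h1, abs_div, abs_mul, abs_mul, abs_of_pos hπ]
  have hα : |α| > 0 := abs_pos.mpr h0
  have h1α : |1 - α| > 0 := abs_pos.mpr (by intro h; apply h1'; linarith)
  have bsin1 : |Real.sin (π * α)| ≤ π * |α| := by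
    calc |Real.sin (π * α)| ≤ |π * α| := Real.abs_sin_le_abs
    _ = π * |α| := by rw [abs_mul, abs_of_pos hπ]
  have bsin2 : |Real.sin (π * α)| ≤ π * |1 - α| := by
    have : Real.sin (π * α) = Real.sin (π - π * α) := (Real.sin_pi_sub _).symm
    rw [this]
    calc |Real.sin (π - π * α)| ≤ |π - π * α| := Real.abs_sin_le_abs
    _ = π * |1 - α| := by rw [show π - π * α = π * (1 - α) by ring, abs_mul, abs_of_pos hπ]
  have bsin3 : |Real.sin (π * α)| ≤ 1 := Real.abs_sin_le_one _
  by_cases hbig : |α| ≤ 2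
  · -- |h1| ≤ 2 ≤ 10/(1+α²)
    have hmax : (1:ℝ)/2 ≤ |α| ∨ (1:ℝ)/2 ≤ |1 - α| := by
      by_contra h
      push_neg at h
      have := abs_add_le α (1 - α)
      simp only [add_sub_cancel] at this
      rw [abs_one] at this
      linarith
    have hb2 : |h1 α| ≤ 2 := by
      rcases hmax with h | h
      · rw [habs]
        rw [div_le_iff₀ (by positivity)]
        calc |Real.sin (π * α)| ≤ π * |1 - α| := bsin2
        _ ≤ 2 * (π * |α| * |1 - α|) := by
            nlinarith [mul_nonneg (mul_nonneg hπ.le h1α.le) (by linarith : (0:ℝ) ≤ 2*|α| - 1)]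
      · rw [habs, div_le_iff₀ (by positivity)]
        calc |Real.sin (π * α)| ≤ π * |α| := bsin1
        _ ≤ 2 * (π * |α| * |1 - α|) := by
            nlinarith [mul_nonneg (mul_nonneg hπ.le hα.le) (by linarith : (0:ℝ) ≤ 2*|1-α| - 1)]
    have : (1:ℝ) + α^2 ≤ 5 := by nlinarith [sq_abs α]
    calc |h1 α| ≤ 2 := hb2
    _ ≤ 10 * (1 + α^2)⁻¹ := by
        rw [le_mul_inv_iff₀ (by positivity)]; linarith
  · push_neg at hbig
    have h1αb : |α| / 2 ≤ |1 - α| := by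
      have := abs_sub_abs_le_abs_sub (α) (α - (α - 1))
      have h' : |1 - α| = |α - 1| := by rw [abs_sub_comm]
      rw [h']
      have := abs_sub_abs_le_abs_sub α 1
      rw [abs_one] at this
      linarith
    rw [habs, div_le_iff₀ (by positivity)]
    have h3 : (0:ℝ) < 1 + α ^ 2 := by positivity
    have hsq : (4:ℝ) < α ^ 2 := by nlinarith [sq_abs α, sq_nonneg (|α| - 2)]
    have hp : π * |α| * (|α| / 2) ≤ π * |α| * |1 - α| :=
      mul_le_mul_of_nonneg_left h1αb (by positivity)
    have key : 1 + α ^ 2 ≤ 10 * (π * |α| * |1 - α|) := by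
      nlinarith [sq_abs α, Real.pi_gt_three]
    calc |Real.sin (π * α)| ≤ 1 := bsin3
    _ = (1 + α ^ 2) * (1 + α ^ 2)⁻¹ := (mul_inv_cancel₀ h3.ne').symm
    _ ≤ 10 * (π * |α| * |1 - α|) * (1 + α ^ 2)⁻¹ := by gcongr
    _ = 10 * (1 + α ^ 2)⁻¹ * (π * |α| * |1 - α|) := by ring

lemma h1_integrable : Integrable h1 := by
  have hm : AEStronglyMeasurable h1 volume := by
    apply Measurable.aestronglyMeasurable
    unfold h1
    fun_prop
  refine Integrable.mono' ((integrable_inv_one_add_sq).const_mul 10) hm ?_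
  filter_upwards with α
  rw [Real.norm_eq_abs]
  exact abs_h1_le α

lemma ae_not_int : ∀ᵐ α : ℝ, ∀ m : ℤ, α ≠ (m : ℝ) := by
  have h : volume (Set.range ((↑) : ℤ → ℝ)) = 0 :=
    Set.Countable.measure_zero (Set.countable_range _) _
  filter_upwards [measure_eq_zero_iff_ae_notMem.mp h] with α hα m hm
  exact hα ⟨m, hm.symm⟩

lemma F1_eq (α : ℝ) (hα : ∀ m : ℤ, α ≠ (m : ℝ)) : Fb 1 α = h1 α := by
  have hπ : (0:ℝ) < π := Real.pi_pos
  have h0 : α ≠ 0 := fun h => hα 0 (by simp [h])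
  have h1' : (1:ℝ) - α ≠ 0 := fun h => hα 1 (by push_cast; linarith)
  have hsin : Real.sin (π * α) ≠ 0 := by
    rw [Ne, Real.sin_eq_zero_iff]
    rintro ⟨m, hm⟩
    have h2 : π * α = π * (m:ℝ) := by linarith
    exact hα m (mul_left_cancel₀ hπ.ne' h2)
  unfold Fb h1
  rw [show ((1:ℕ):ℝ) + 1 = 2 by norm_num, Real.Gamma_two,
    show (2:ℝ) - α = (1 - α) + 1 by ring, Real.Gamma_add_one h1',
    show (1:ℝ) + α = α + 1 by ring, Real.Gamma_add_one h0]
  have key : Real.Gamma (1 - α) * Real.Gamma α = π / Real.sin (π * α) := by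
    rw [mul_comm]; exact Real.Gamma_mul_Gamma_one_sub α
  rw [show (1 - α) * Real.Gamma (1 - α) * (α * Real.Gamma α)
      = (1 - α) * α * (Real.Gamma (1 - α) * Real.Gamma α) by ring, key,
    div_eq_div_iff (mul_ne_zero (mul_ne_zero h1' h0) (div_ne_zero hπ.ne' hsin))
      (mul_ne_zero (mul_ne_zero hπ.ne' h0) h1')]
  field_simp

open FourierTransform

noncomputable def gg : ℝ → ℂ :=
  Set.indicator (Set.Icc (-(1/2) : ℝ) (1/2)) (fun t => 1 + Complex.exp (2 * π * t * Complex.I))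

lemma gg_integrable : Integrable gg := by
  rw [gg, integrable_indicator_iff measurableSet_Icc]
  exact Continuous.integrableOn_Icc (by continuity)

lemma gg_zero : gg 0 = 2 := by
  rw [gg, Set.indicator_of_mem (by norm_num : (0:ℝ) ∈ Set.Icc (-(1/2):ℝ) (1/2))]
  norm_num [Complex.ofReal_zero]

lemma gg_contAt : ContinuousAt gg 0 := by
  have hc : Continuous fun t : ℝ => 1 + Complex.exp (2 * π * t * Complex.I) := by continuity
  apply hc.continuousAt.congr
  have hmem : Set.Ioo (-(1/2):ℝ) (1/2) ∈ nhds (0:ℝ) := Ioo_mem_nhds (by norm_num) (by norm_num)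
  filter_upwards [hmem] with t ht
  rw [gg, Set.indicator_of_mem (Set.Ioo_subset_Icc_self ht)]

lemma int_exp {β : ℝ} (hβ : β ≠ 0) :
    ∫ v in (-(1/2):ℝ)..(1/2), Complex.exp (↑(2 * π * β * v) * Complex.I)
      = ((Real.sin (π * β) / (π * β) : ℝ) : ℂ) := by
  have hπ : (π:ℝ) ≠ 0 := Real.pi_ne_zero
  have hc : (2 * (π:ℂ) * β * Complex.I) ≠ 0 := by
    simp [Complex.ofReal_ne_zero, hπ, hβ, Complex.I_ne_zero]
  have he : ∀ v : ℝ, Complex.exp (↑(2 * π * β * v) * Complex.I)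
      = Complex.exp ((2 * (π:ℂ) * β * Complex.I) * v) := by
    intro v; congr 1; push_cast; ring
  simp_rw [he]
  rw [integral_exp_mul_complex hc]
  have hz : ((π:ℂ) * β) ≠ 0 := by
    simp [Complex.ofReal_ne_zero, hπ, hβ]
  rw [show (2 * (π:ℂ) * β * Complex.I) * (1/2:ℝ) = ((π:ℂ)*β) * Complex.I by push_cast; ring,
    show (2 * (π:ℂ) * β * Complex.I) * (-(1/2):ℝ) = -((π:ℂ)*β) * Complex.I by push_cast; ring]
  rw [Complex.ofReal_div, Complex.ofReal_sin, Complex.ofReal_mul, Complex.sin]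
  field_simp
  ring_nf
  rw [Complex.I_sq]
  ring

lemma fourier_gg {α : ℝ} (hα : ∀ m : ℤ, α ≠ (m : ℝ)) : (𝓕 gg) α = ((h1 α : ℝ) : ℂ) := by
  have hπ : (0:ℝ) < π := Real.pi_pos
  have h0 : α ≠ 0 := fun h => hα 0 (by simp [h])
  have h1' : (1:ℝ) - α ≠ 0 := fun h => hα 1 (by push_cast; linarith)
  rw [Real.fourier_real_eq_integral_exp_smul]
  have key : ∀ v : ℝ, Complex.exp (↑(-2 * π * v * α) * Complex.I) • gg v
      = Set.indicator (Set.Icc (-(1/2):ℝ) (1/2))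
          (fun v => Complex.exp (↑(2 * π * (-α) * v) * Complex.I)
            + Complex.exp (↑(2 * π * (1-α) * v) * Complex.I)) v := by
    intro v
    rw [gg]
    by_cases hv : v ∈ Set.Icc (-(1/2):ℝ) (1/2)
    · rw [Set.indicator_of_mem hv, Set.indicator_of_mem hv, smul_eq_mul, mul_add, mul_one,
        ← Complex.exp_add]
      congr 2
      · congr 1; push_cast; ring
      · push_cast; ring
    · rw [Set.indicator_of_notMem hv, Set.indicator_of_notMem hv, smul_zero]
  simp_rw [key]
  rw [integral_indicator measurableSet_Icc, MeasureTheory.integral_Icc_eq_integral_Ioc,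
    ← intervalIntegral.integral_of_le (by norm_num : (-(1/2):ℝ) ≤ 1/2)]
  rw [intervalIntegral.integral_add
    ((Continuous.intervalIntegrable (by continuity) _ _))
    ((Continuous.intervalIntegrable (by continuity) _ _))]
  rw [int_exp (neg_ne_zero.mpr h0), int_exp h1']
  rw [← Complex.ofReal_add]
  congr 1
  have hπα : π * α ≠ 0 := mul_ne_zero hπ.ne' h0
  have hπ1α : π - π * α ≠ 0 := by
    rw [show π - π * α = π * (1 - α) by ring]; exact mul_ne_zero hπ.ne' h1'
  rw [show π * -α = -(π * α) by ring, Real.sin_neg,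
    show π * (1 - α) = π - π * α by ring, Real.sin_pi_sub, h1, neg_div_neg_eq,
    div_add_div _ _ hπα hπ1α,
    div_eq_div_iff (mul_ne_zero hπα hπ1α) (mul_ne_zero (mul_ne_zero hπ.ne' h0) h1')]
  ring

lemma integral_h1 : ∫ α : ℝ, h1 α = 2 := by
  have hae : (𝓕 gg) =ᵐ[volume] fun α => ((h1 α : ℝ) : ℂ) :=
    ae_not_int.mono fun α hα => fourier_gg hα
  have hint : Integrable (𝓕 gg) := (h1_integrable.ofReal).congr hae.symm
  have inv := gg_integrable.fourierInv_fourier_eq hint gg_contAt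
  rw [gg_zero, Real.fourierInv_eq] at inv
  simp only [inner_zero_right, AddChar.map_zero_eq_one, one_smul] at inv
  rw [integral_congr_ae hae,
    show (∫ a : ℝ, ((h1 a : ℝ) : ℂ)) = ((∫ a : ℝ, h1 a : ℝ) : ℂ) from integral_ofReal] at inv
  exact_mod_cast inv

lemma Fb1_ae : Fb 1 =ᵐ[volume] h1 := ae_not_int.mono fun α hα => F1_eq α hα

lemma Fb_main (n : ℕ) (hn : 1 ≤ n) : Integrable (Fb n) ∧ ∫ α : ℝ, Fb n α = 2 ^ n := by
  induction n, hn using Nat.le_induction with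
  | base =>
    refine ⟨h1_integrable.congr Fb1_ae.symm, ?_⟩
    rw [integral_congr_ae Fb1_ae, integral_h1]; norm_num
  | succ m hm ih =>
    obtain ⟨hint, hval⟩ := ih
    have hint' : Integrable (fun α => Fb m (α - 1)) := hint.comp_sub_right 1
    have heq : Fb (m+1) = fun α => Fb m α + Fb m (α - 1) := funext fun α => pascal m α
    refine ⟨heq ▸ hint.add hint', ?_⟩
    rw [heq, integral_add hint hint', integral_sub_right_eq_self (Fb m) 1, hval, pow_succ]
    ring

theorem integral_generalized_binomial (n : ℕ) (hn : 1 ≤ n) :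
    ∫ α : ℝ, Real.Gamma ((n : ℝ) + 1) / (Real.Gamma ((n : ℝ) + 1 - α) * Real.Gamma (1 + α)) =
      2 ^ n := (Fb_main n hn).2
end
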